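/- Number of canonical boxes: for n points in ℝ^d and ℓ = 16(d + log₂ n)^{d−1}, the hierarchical canonical box construction (dyadic blocks nested along each coordinate) produces at most ∑_{types (i_1 ≥ ... ≥ i_d ≥ 0)} n/(2^{i_d}·ℓ) ≤ (2n/ℓ)·(d + log₂(n/ℓ))^{d−1} ≤ n/8 canonical boxes. -/

import Mathlib

open Classical in
/-- Number of canonical boxes: with `ℓ = 16(d + log₂ n)^{d-1}`, summing the per-type
bound `n/(2^{i_d}·ℓ)` over all non-increasing type vectors `(i₁ ≥ … ≥ i_d ≥ 0)` with
`2^{i₁}·ℓ ≤ n` gives at most `(2n/ℓ)·(d + log₂(n/ℓ))^{d-1} ≤ n/8` canonical boxes. -/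
theorem canonical_box_count (n d : ℕ) (hd : 1 ≤ d) (hn : 2 ≤ n)
    (L : ℝ) (hL : L = 16 * ((d : ℝ) + Real.logb 2 n) ^ (d - 1))
    (hLn : L ≤ (n : ℝ) / 8) :
    (∑ s ∈ Finset.univ.filter (fun s : Fin d → Fin (Nat.log 2 n + 1) =>
        (∀ j k : Fin d, j ≤ k → (s k : ℕ) ≤ (s j : ℕ)) ∧
        (2 : ℝ) ^ ((s ⟨0, by omega⟩ : ℕ)) * L ≤ n),
      (n : ℝ) / (2 ^ ((s ⟨d - 1, by omega⟩ : ℕ)) * L))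
      ≤ (2 * n / L) * ((d : ℝ) + Real.logb 2 ((n : ℝ) / L)) ^ (d - 1) ∧
    (2 * n / L) * ((d : ℝ) + Real.logb 2 ((n : ℝ) / L)) ^ (d - 1) ≤ (n : ℝ) / 8 := by
  classical
  have hn2 : (2:ℝ) ≤ (n:ℝ) := by exact_mod_cast hn
  have hd1 : (1:ℝ) ≤ (d:ℝ) := by exact_mod_cast hd
  have hlogn : (1:ℝ) ≤ Real.logb 2 (n:ℝ) := by
    have h := Real.logb_le_logb_of_le (b := 2) (one_lt_two) (by norm_num : (0:ℝ) < 2) hn2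
    simpa using h
  have hbase : (2:ℝ) ≤ (d:ℝ) + Real.logb 2 n := by linarith
  have hX1 : (1:ℝ) ≤ ((d:ℝ) + Real.logb 2 n) ^ (d - 1) := one_le_pow₀ (by linarith)
  have hL16 : (16:ℝ) ≤ L := by rw [hL]; nlinarith
  have hLpos : (0:ℝ) < L := by linarith
  have hnL8 : (8:ℝ) ≤ (n:ℝ) / L := by
    rw [le_div_iff₀ hLpos]; linarith
  have hlogNL : (0:ℝ) ≤ Real.logb 2 ((n:ℝ)/L) := Real.logb_nonneg one_lt_two (by linarith)
  -- Part 2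
  have hNLle : (n:ℝ)/L ≤ (n:ℝ) := by
    rw [div_le_iff₀ hLpos]; nlinarith
  have hlog_le : Real.logb 2 ((n:ℝ)/L) ≤ Real.logb 2 (n:ℝ) :=
    Real.logb_le_logb_of_le one_lt_two (by linarith) hNLle
  have part2 : (2 * n / L) * ((d : ℝ) + Real.logb 2 ((n : ℝ) / L)) ^ (d - 1) ≤ (n : ℝ) / 8 := by
    have h1 : ((d:ℝ) + Real.logb 2 ((n:ℝ)/L)) ^ (d-1) ≤ ((d:ℝ) + Real.logb 2 (n:ℝ)) ^ (d-1) :=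
      pow_le_pow_left₀ (by linarith) (by linarith) _
    have h2 : (2 * (n:ℝ) / L) * ((d : ℝ) + Real.logb 2 ((n : ℝ) / L)) ^ (d - 1)
        ≤ (2 * (n:ℝ) / L) * (((d:ℝ) + Real.logb 2 (n:ℝ)) ^ (d-1)) :=
      mul_le_mul_of_nonneg_left h1 (by positivity)
    have h3 : (2 * (n:ℝ) / L) * (((d:ℝ) + Real.logb 2 (n:ℝ)) ^ (d-1)) = (n:ℝ)/8 := by
      have : ((d:ℝ) + Real.logb 2 (n:ℝ)) ^ (d-1) = L / 16 := by rw [hL]; ring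
      rw [this]; field_simp; ring
    linarith
  refine ⟨?_, part2⟩
  -- Part 1
  set K := Nat.log 2 n + 1 with hK
  set lst : Fin d := ⟨d - 1, by omega⟩ with hlst
  set fst : Fin d := ⟨0, by omega⟩ with hfst
  set M := ⌊Real.logb 2 ((n:ℝ)/L)⌋₊ with hM
  set A : Finset (Fin d → Fin K) :=
    Finset.univ.filter (fun s => ∀ j, (s j : ℕ) ≤ M) with hA
  have hMlog : ((M:ℝ)) ≤ Real.logb 2 ((n:ℝ)/L) := Nat.floor_le hlogNL
  -- membership bound
  have hsub : (Finset.univ.filter (fun s : Fin d → Fin K =>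
        (∀ j k : Fin d, j ≤ k → (s k : ℕ) ≤ (s j : ℕ)) ∧
        (2 : ℝ) ^ ((s fst : ℕ)) * L ≤ n)) ⊆ A := by
    intro s hs
    simp only [Finset.mem_filter, Finset.mem_univ, true_and] at hs
    obtain ⟨hmono, hbnd⟩ := hs
    rw [hA, Finset.mem_filter]
    refine ⟨Finset.mem_univ _, fun j => ?_⟩
    have h0j : fst ≤ j := by simp [hfst, Fin.le_def]
    have h1 : (s j : ℕ) ≤ (s fst : ℕ) := hmono fst j h0j
    have h2 : (2:ℝ) ^ ((s fst : ℕ)) ≤ (n:ℝ)/L := by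
      rw [le_div_iff₀ hLpos]; exact hbnd
    have h3 : ((s fst : ℕ) : ℝ) ≤ Real.logb 2 ((n:ℝ)/L) := by
      have := Real.logb_le_logb_of_le (b := 2) one_lt_two (by positivity) h2
      rw [Real.logb_pow, Real.logb_self_eq_one one_lt_two] at this
      simpa using this
    have h4 : (s fst : ℕ) ≤ M := Nat.le_floor h3
    omega
  have hnonneg : ∀ s : Fin d → Fin K, 0 ≤ (n:ℝ) / (2 ^ ((s lst : ℕ)) * L) := by
    intro s; positivity
  have step1 : (∑ s ∈ Finset.univ.filter (fun s : Fin d → Fin K =>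
        (∀ j k : Fin d, j ≤ k → (s k : ℕ) ≤ (s j : ℕ)) ∧
        (2 : ℝ) ^ ((s fst : ℕ)) * L ≤ n),
      (n : ℝ) / (2 ^ ((s lst : ℕ)) * L))
      ≤ ∑ s ∈ A, (n : ℝ) / (2 ^ ((s lst : ℕ)) * L) :=
    Finset.sum_le_sum_of_subset_of_nonneg hsub (fun s _ _ => hnonneg s)
  -- fiberwise
  have hfibcard : ∀ i : Fin K, (A.filter (fun s => s lst = i)).card ≤ (M+1)^(d-1) := by
    intro i
    have hcard := Finset.card_le_card_of_injOn
      (f := fun (s : Fin d → Fin K) (j : Fin (d-1)) => (s ⟨j.val, by omega⟩ : ℕ))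
      (s := A.filter (fun s => s lst = i))
      (t := Fintype.piFinset (fun _ : Fin (d-1) => Finset.range (M+1)))
      (by
        intro s hs
        simp only [Finset.mem_coe, Finset.mem_filter, hA, Finset.mem_univ, true_and] at hs
        rw [Finset.mem_coe, Fintype.mem_piFinset]
        intro j
        rw [Finset.mem_range]
        exact Nat.lt_succ_of_le (hs.1 _))
      (by
        intro s hs t ht h
        simp only [Finset.mem_coe, Finset.mem_filter, hA, Finset.mem_univ, true_and] at hs ht
        funext j
        rcases lt_or_ge j.val (d-1) with hj | hj
        · have := congrFun h ⟨j.val, hj⟩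
          simp only at this
          have hjj : (⟨j.val, by omega⟩ : Fin d) = j := by ext; rfl
          rw [hjj] at this
          exact Fin.val_injective this
        · have hj' : j = lst := by
            have : j.val = d - 1 := by omega
            ext; simp [hlst, this]
          rw [hj', hs.2, ht.2])
    simpa using hcard
  have step2 : ∑ s ∈ A, (n : ℝ) / (2 ^ ((s lst : ℕ)) * L)
      = ∑ i : Fin K, ((A.filter (fun s => s lst = i)).card : ℝ) * ((n:ℝ) / (2 ^ (i:ℕ) * L)) := by
    rw [← Finset.sum_fiberwise' A (fun s => s lst) (fun i => (n:ℝ) / (2 ^ (i:ℕ) * L))]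
    · exact Finset.sum_congr rfl fun i _ => by rw [Finset.sum_const, nsmul_eq_mul]
  have step3 : ∑ i : Fin K, ((A.filter (fun s => s lst = i)).card : ℝ) * ((n:ℝ) / (2 ^ (i:ℕ) * L))
      ≤ (((M:ℝ)+1)^(d-1)) * ∑ i : Fin K, ((n:ℝ) / (2 ^ (i:ℕ) * L)) := by
    rw [Finset.mul_sum]
    refine Finset.sum_le_sum fun i _ => mul_le_mul_of_nonneg_right ?_ (by positivity)
    have := hfibcard i
    calc ((A.filter (fun s => s lst = i)).card : ℝ) ≤ (((M+1)^(d-1) : ℕ) : ℝ) := by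
          exact_mod_cast this
      _ = ((M:ℝ)+1)^(d-1) := by push_cast; ring
  have step4 : ∑ i : Fin K, ((n:ℝ) / (2 ^ (i:ℕ) * L)) ≤ ((n:ℝ)/L) * 2 := by
    have hterm : ∀ i : ℕ, (n:ℝ) / (2 ^ i * L) = ((n:ℝ)/L) * (1/2)^i := by
      intro i
      rw [div_pow, one_pow, div_mul_div_comm, mul_one, mul_comm L]
    calc ∑ i : Fin K, ((n:ℝ) / (2 ^ (i:ℕ) * L))
        = ((n:ℝ)/L) * ∑ i ∈ Finset.range K, (1/2:ℝ)^i := by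
          rw [Finset.mul_sum, ← Fin.sum_univ_eq_sum_range (fun i => ((n:ℝ)/L) * (1/2:ℝ)^i)]
          exact Finset.sum_congr rfl fun i _ => hterm i
      _ ≤ ((n:ℝ)/L) * 2 :=
          mul_le_mul_of_nonneg_left (sum_geometric_two_le K) (by positivity)
  have step5 : (((M:ℝ)+1)^(d-1)) ≤ ((d:ℝ) + Real.logb 2 ((n:ℝ)/L)) ^ (d-1) :=
    pow_le_pow_left₀ (by positivity) (by linarith) _
  have hfin : (((M:ℝ)+1)^(d-1)) * (((n:ℝ)/L) * 2)
      ≤ (2 * n / L) * ((d : ℝ) + Real.logb 2 ((n : ℝ) / L)) ^ (d - 1) := by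
    have h := mul_le_mul_of_nonneg_right step5 (show (0:ℝ) ≤ ((n:ℝ)/L) * 2 by positivity)
    calc (((M:ℝ)+1)^(d-1)) * (((n:ℝ)/L) * 2)
        ≤ (((d:ℝ) + Real.logb 2 ((n:ℝ)/L)) ^ (d-1)) * (((n:ℝ)/L) * 2) := h
      _ = (2 * n / L) * ((d : ℝ) + Real.logb 2 ((n : ℝ) / L)) ^ (d - 1) := by ring
  have step34 : ∑ s ∈ A, (n : ℝ) / (2 ^ ((s lst : ℕ)) * L)
      ≤ (((M:ℝ)+1)^(d-1)) * (((n:ℝ)/L) * 2) := by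
    rw [step2]
    calc _ ≤ (((M:ℝ)+1)^(d-1)) * ∑ i : Fin K, ((n:ℝ) / (2 ^ (i:ℕ) * L)) := step3
      _ ≤ (((M:ℝ)+1)^(d-1)) * (((n:ℝ)/L) * 2) :=
          mul_le_mul_of_nonneg_left step4 (by positivity)
  linarith
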